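/- (Passty) Let H be a real Hilbert space, (x_n)_{n≥1} a sequence in H, λ_n > 0 stepsizes with σ_n = λ_1 + ⋯ + λ_n → ∞, and let x̄_n = (1/σ_n) Σ_{k=1}^n λ_k x_k be the weighted averages. Let F ⊆ H and assume that for every u ∈ F the limit of ‖x_n − u‖ as n → ∞ exists. Then the set of weak cluster points of (x_n) lying in F contains at most one point, and the set of weak cluster points of (x̄_n) lying in F contains at most one point. In particular, if every weak cluster point of (x_n) (resp. of (x̄_n)) lies in F and the sequence is bounded, then (x_n) (resp. (x̄_n)) converges weakly. -/

import Mathlib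

open RealInnerProductSpace Filter Topology Finset

/-- `p` is a weak cluster point of the sequence `x`. -/
def WeakClusterPt {H : Type*} [NormedAddCommGroup H] [InnerProductSpace ℝ H]
    (x : ℕ → H) (p : H) : Prop :=
  ∃ φ : ℕ → ℕ, StrictMono φ ∧
    ∀ y : H, Tendsto (fun n => ⟪x (φ n), y⟫) atTop (𝓝 ⟪p, y⟫)

/-- The sequence `x` converges weakly to `p`. -/
def WeakConv {H : Type*} [NormedAddCommGroup H] [InnerProductSpace ℝ H]
    (x : ℕ → H) (p : H) : Prop :=
  ∀ y : H, Tendsto (fun n => ⟪x n, y⟫) atTop (𝓝 ⟪p, y⟫)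


/-- Weighted Cesàro convergence. -/
lemma weighted_cesaro {w a : ℕ → ℝ} {l : ℝ} (hw : ∀ n, 0 ≤ w n)
    (hσ : Tendsto (fun n => ∑ i ∈ range n, w i) atTop atTop)
    (ha : Tendsto a atTop (𝓝 l)) :
    Tendsto (fun n => (∑ i ∈ range n, w i)⁻¹ * ∑ i ∈ range n, w i * a i) atTop (𝓝 l) := by
  have hf : (fun i => w i * (a i - l)) =o[atTop] w := by
    rw [Asymptotics.isLittleO_iff]
    intro ε hε
    filter_upwards [ha.eventually (Metric.closedBall_mem_nhds l hε)] with n hn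
    rw [Real.norm_eq_abs, Real.norm_eq_abs, abs_mul, abs_of_nonneg (hw n)]
    have h2 : |a n - l| ≤ ε := by
      simpa [Real.dist_eq] using hn
    nlinarith [hw n, abs_nonneg (a n - l)]
  have hsum := hf.sum_range hw hσ
  have hne : ∀ᶠ n in atTop, (∑ i ∈ range n, w i) ≠ 0 := by
    filter_upwards [hσ.eventually_gt_atTop 0] with n hn; exact ne_of_gt hn
  have h0 : Tendsto (fun n => (∑ i ∈ range n, w i)⁻¹ * ∑ i ∈ range n, w i * (a i - l))
      atTop (𝓝 0) := by
    have := (Asymptotics.isLittleO_iff_tendsto'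
      (hne.mono fun n h h0 => absurd h0 h)).1 hsum
    exact this.congr (fun n => by rw [div_eq_inv_mul])
  have h1 : Tendsto (fun n => (∑ i ∈ range n, w i)⁻¹ * ∑ i ∈ range n, w i * (a i - l) + l)
      atTop (𝓝 (0 + l)) := h0.add tendsto_const_nhds
  rw [zero_add] at h1
  refine h1.congr' ?_
  filter_upwards [hne] with n hn
  have hs : ∑ i ∈ range n, w i * a i
      = (∑ i ∈ range n, w i * (a i - l)) + (∑ i ∈ range n, w i) * l := by
    rw [sum_mul, ← sum_add_distrib]
    exact Finset.sum_congr rfl fun i _ => by ring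
  rw [hs, mul_add, mul_comm ((∑ i ∈ range n, w i)) l, ← mul_assoc, mul_comm _ l, mul_assoc,
    inv_mul_cancel₀ hn, mul_one]

/-- Every bounded sequence in a real Hilbert space has a weak cluster point. -/
lemma exists_weakClusterPt {H : Type*} [NormedAddCommGroup H] [InnerProductSpace ℝ H]
    [CompleteSpace H] {x : ℕ → H} {M : ℝ} (hM : ∀ n, ‖x n‖ ≤ M) :
    ∃ p : H, WeakClusterPt x p := by
  classical
  set K : Submodule ℝ H := (Submodule.span ℝ (Set.range x)).topologicalClosure with hK
  haveI : CompleteSpace K :=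
    (Submodule.isClosed_topologicalClosure (Submodule.span ℝ (Set.range x))).completeSpace_coe
  have hxK : ∀ n, x n ∈ K := fun n =>
    Submodule.le_topologicalClosure _ (Submodule.subset_span ⟨n, rfl⟩)
  -- separability
  have hsep : TopologicalSpace.IsSeparable (K : Set H) := by
    rw [hK, Submodule.topologicalClosure_coe]
    exact ((Set.countable_range x).isSeparable.span).closure
  obtain ⟨c, hc_count, hc⟩ := hsep
  obtain ⟨e, he⟩ := (hc_count.insert (0 : H)).exists_eq_range (Set.insert_nonempty _ _)
  have hcc : (K : Set H) ⊆ closure (Set.range e) := by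
    rw [← he]
    exact hc.trans (closure_mono (Set.subset_insert _ _))
  -- diagonal extraction via Tychonoff + metrizability of ℕ → ℝ
  have hM0 : 0 ≤ M := le_trans (norm_nonneg _) (hM 0)
  set S : Set (ℕ → ℝ) := Set.pi Set.univ fun k => Set.Icc (-(M * ‖e k‖)) (M * ‖e k‖) with hS
  have hScomp : IsCompact S := isCompact_univ_pi fun k => isCompact_Icc
  have hmem : ∀ n, (fun k => ⟪x n, e k⟫) ∈ S := by
    intro n
    rw [hS, Set.mem_univ_pi]
    intro k
    have h1 : |⟪x n, e k⟫| ≤ M * ‖e k‖ :=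
      (abs_real_inner_le_norm _ _).trans
        (mul_le_mul_of_nonneg_right (hM n) (norm_nonneg _))
    exact abs_le.1 h1
  obtain ⟨g, -, φ, hφ, hg⟩ := hScomp.isSeqCompact hmem
  have hgk : ∀ k, Tendsto (fun n => ⟪x (φ n), e k⟫) atTop (𝓝 (g k)) := by
    intro k
    have := (tendsto_pi_nhds.1 hg) k
    exact this
  -- Cauchy for all y
  have hC : ∀ y : H, CauchySeq fun n => ⟪x (φ n), y⟫ := by
    intro y
    set P : H := (Submodule.orthogonalProjectionOnto K y : H) with hP
    have hPK : P ∈ K := (Submodule.orthogonalProjectionOnto K y).2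
    have hyP : ∀ n, ⟪x n, y⟫ = ⟪x n, P⟫ := by
      intro n
      have horth : y - P ∈ Kᗮ := Submodule.sub_starProjection_mem_orthogonal (K := K) y
      have h3 := (Submodule.mem_orthogonal K (y - P)).1 horth (x n) (hxK n)
      have h2 : ⟪x n, y - P⟫ = 0 := h3
      rw [inner_sub_right] at h2
      linarith
    rw [Metric.cauchySeq_iff]
    intro ε hε
    have hε4 : 0 < ε / (4 * (M + 1)) := by positivity
    obtain ⟨z, hz, hdz⟩ := Metric.mem_closure_iff.1 (hcc hPK) _ hε4
    obtain ⟨k, rfl⟩ := hz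
    have hck : CauchySeq fun n => ⟪x (φ n), e k⟫ := (hgk k).cauchySeq
    obtain ⟨N, hN⟩ := Metric.cauchySeq_iff.1 hck (ε / 2) (by positivity)
    refine ⟨N, fun m hm n hn => ?_⟩
    have hPe : ‖P - e k‖ < ε / (4 * (M + 1)) := by rwa [dist_eq_norm] at hdz
    have key : dist ⟪x (φ m), y⟫ ⟪x (φ n), y⟫
        ≤ |⟪x (φ m) - x (φ n), P - e k⟫| + dist ⟪x (φ m), e k⟫ ⟪x (φ n), e k⟫ := by
      rw [Real.dist_eq, Real.dist_eq, hyP, hyP]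
      have : ⟪x (φ m), P⟫ - ⟪x (φ n), P⟫
          = ⟪x (φ m) - x (φ n), P - e k⟫ + (⟪x (φ m), e k⟫ - ⟪x (φ n), e k⟫) := by
        rw [inner_sub_left, inner_sub_right, inner_sub_right]
        ring
      rw [this]
      exact (abs_add_le _ _)
    have hnorm : ‖x (φ m) - x (φ n)‖ ≤ 2 * M := by
      calc ‖x (φ m) - x (φ n)‖ ≤ ‖x (φ m)‖ + ‖x (φ n)‖ := norm_sub_le _ _
      _ ≤ 2 * M := by linarith [hM (φ m), hM (φ n)]
    have h5 : |⟪x (φ m) - x (φ n), P - e k⟫| ≤ 2 * M * (ε / (4 * (M + 1))) := by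
      calc |⟪x (φ m) - x (φ n), P - e k⟫| ≤ ‖x (φ m) - x (φ n)‖ * ‖P - e k‖ :=
        abs_real_inner_le_norm _ _
      _ ≤ 2 * M * (ε / (4 * (M + 1))) := by
          apply mul_le_mul hnorm hPe.le (norm_nonneg _) (by positivity)
    have h6 : 2 * M * (ε / (4 * (M + 1))) ≤ ε / 2 := by
      rw [show 2 * M * (ε / (4 * (M + 1))) = (2 * M * ε) / (4 * (M + 1)) by ring,
        div_le_div_iff₀ (by positivity : (0:ℝ) < 4 * (M + 1)) (by norm_num : (0:ℝ) < 2)]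
      nlinarith [hε.le, hM0]
    have h7 := hN m hm n hn
    calc dist ⟪x (φ m), y⟫ ⟪x (φ n), y⟫
        ≤ |⟪x (φ m) - x (φ n), P - e k⟫| + dist ⟪x (φ m), e k⟫ ⟪x (φ n), e k⟫ := key
      _ < ε / 2 + ε / 2 := by have h8 := h5.trans h6; linarith
      _ = ε := by ring
  -- build the limit functional and use Riesz
  set f : H → ℝ := fun y => limUnder atTop fun n => ⟪x (φ n), y⟫ with hf
  have htend : ∀ y, Tendsto (fun n => ⟪x (φ n), y⟫) atTop (𝓝 (f y)) := fun y =>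
    (hC y).tendsto_limUnder
  have hadd : ∀ y z, f (y + z) = f y + f z := by
    intro y z
    refine tendsto_nhds_unique (htend (y + z)) ?_
    have := (htend y).add (htend z)
    refine this.congr fun n => ?_
    rw [inner_add_right]
  have hsmul : ∀ (c : ℝ) (y : H), f (c • y) = c * f y := by
    intro a y
    refine tendsto_nhds_unique (htend (a • y)) ?_
    have := (htend y).const_mul a
    refine this.congr fun n => ?_
    rw [real_inner_smul_right]
  have hbound : ∀ y, |f y| ≤ M * ‖y‖ := by
    intro y
    refine le_of_tendsto (htend y).abs (Eventually.of_forall fun n => ?_)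
    exact (abs_real_inner_le_norm _ _).trans
      (mul_le_mul_of_nonneg_right (hM _) (norm_nonneg _))
  set L : H →L[ℝ] ℝ := LinearMap.mkContinuous
    { toFun := f, map_add' := hadd, map_smul' := hsmul } M
    (fun y => by rw [Real.norm_eq_abs]; exact hbound y) with hL
  refine ⟨(InnerProductSpace.toDual ℝ H).symm L, φ, hφ, fun y => ?_⟩
  have : ⟪(InnerProductSpace.toDual ℝ H).symm L, y⟫ = L y :=
    InnerProductSpace.toDual_symm_apply
  rw [this]
  exact htend y

/-- A subsequence's weak cluster point is a weak cluster point. -/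
lemma WeakClusterPt.of_subseq {H : Type*} [NormedAddCommGroup H] [InnerProductSpace ℝ H]
    {x : ℕ → H} {ψ : ℕ → ℕ} (hψ : StrictMono ψ) {p : H}
    (h : WeakClusterPt (fun n => x (ψ n)) p) : WeakClusterPt x p := by
  obtain ⟨φ, hφ, hy⟩ := h
  exact ⟨ψ ∘ φ, hψ.comp hφ, hy⟩

/-- A bounded sequence whose weak cluster points all coincide converges weakly. -/
lemma weakConv_of_bounded_unique {H : Type*} [NormedAddCommGroup H] [InnerProductSpace ℝ H]
    [CompleteSpace H] {x : ℕ → H} {M : ℝ} (hM : ∀ n, ‖x n‖ ≤ M)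
    (huniq : ∀ p q : H, WeakClusterPt x p → WeakClusterPt x q → p = q) :
    ∃ xstar : H, WeakConv x xstar := by
  obtain ⟨p, hp⟩ := exists_weakClusterPt hM
  refine ⟨p, fun y => ?_⟩
  by_contra hcon
  rw [Metric.tendsto_atTop] at hcon
  push_neg at hcon
  obtain ⟨ε, hε, hfreq⟩ := hcon
  have hfr : ∃ᶠ n in atTop, ε ≤ dist ⟪x n, y⟫ ⟪p, y⟫ := by
    rw [frequently_atTop]
    exact fun N => hfreq N
  obtain ⟨ψ, hψ, hψ2⟩ := Filter.extraction_of_frequently_atTop hfr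
  have hMψ : ∀ n, ‖(fun n => x (ψ n)) n‖ ≤ M := fun n => hM (ψ n)
  obtain ⟨q, hq⟩ := exists_weakClusterPt hMψ
  have hqx : WeakClusterPt x q := WeakClusterPt.of_subseq hψ hq
  have hpq : q = p := huniq q p hqx hp
  obtain ⟨φ', hφ', hy'⟩ := hq
  have htend : Tendsto (fun n => dist ⟪x (ψ (φ' n)), y⟫ ⟪p, y⟫) atTop
      (𝓝 (dist ⟪q, y⟫ ⟪p, y⟫)) := (hy' y).dist tendsto_const_nhds
  have hge : ε ≤ dist ⟪q, y⟫ ⟪p, y⟫ :=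
    ge_of_tendsto htend (Eventually.of_forall fun n => hψ2 (φ' n))
  rw [hpq, dist_self] at hge
  linarith

/-- Passty: if `‖x_n − u‖` converges for every `u ∈ F`, then the weak cluster
points of `(x_n)` lying in `F` form at most a singleton, and likewise for the weighted
averages `x̄_n`; in particular, boundedness together with all weak cluster points lying in
`F` yields weak convergence of `(x_n)` (resp. of `(x̄_n)`). -/
theorem stmt14 {H : Type*} [NormedAddCommGroup H] [InnerProductSpace ℝ H] [CompleteSpace H]
    (F : Set H) (x : ℕ → H) (lam : ℕ → ℝ) (hlam : ∀ n : ℕ, 0 < lam (n + 1))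
    (hσ : Tendsto (fun n => ∑ i ∈ range n, lam (i + 1)) atTop atTop)
    (xbar : ℕ → H)
    (hxbar : ∀ n : ℕ, xbar n =
      (∑ i ∈ range n, lam (i + 1))⁻¹ • ∑ i ∈ range n, lam (i + 1) • x (i + 1))
    (h1 : ∀ u ∈ F, ∃ l : ℝ, Tendsto (fun n => ‖x n - u‖) atTop (𝓝 l)) :
    {p : H | WeakClusterPt x p ∧ p ∈ F}.Subsingleton ∧
    {p : H | WeakClusterPt xbar p ∧ p ∈ F}.Subsingleton ∧
    ((∃ M : ℝ, ∀ n, ‖x n‖ ≤ M) → (∀ p : H, WeakClusterPt x p → p ∈ F) →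
      ∃ xstar : H, WeakConv x xstar) ∧
    ((∃ M : ℝ, ∀ n, ‖xbar n‖ ≤ M) → (∀ p : H, WeakClusterPt xbar p → p ∈ F) →
      ∃ xstar : H, WeakConv xbar xstar) := by
  -- for any `p, q ∈ F`, the inner products `⟪x n, p - q⟫` converge
  have key : ∀ p ∈ F, ∀ q ∈ F, ∃ L : ℝ,
      Tendsto (fun n => ⟪x n, p - q⟫) atTop (𝓝 L) := by
    intro p hp q hq
    obtain ⟨lp, hlp⟩ := h1 p hp
    obtain ⟨lq, hlq⟩ := h1 q hq
    refine ⟨(‖p‖ ^ 2 - ‖q‖ ^ 2 - (lp ^ 2 - lq ^ 2)) / 2, ?_⟩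
    have h2 : Tendsto (fun n => (‖p‖ ^ 2 - ‖q‖ ^ 2 - (‖x n - p‖ ^ 2 - ‖x n - q‖ ^ 2)) / 2)
        atTop (𝓝 ((‖p‖ ^ 2 - ‖q‖ ^ 2 - (lp ^ 2 - lq ^ 2)) / 2)) := by
      exact (tendsto_const_nhds.sub ((hlp.pow 2).sub (hlq.pow 2))).div_const 2
    refine h2.congr fun n => ?_
    rw [norm_sub_sq_real, norm_sub_sq_real, inner_sub_right]
    ring
  -- the averaged sequence also has converging inner products against `p - q`
  have keybar : ∀ p ∈ F, ∀ q ∈ F, ∃ L : ℝ,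
      Tendsto (fun n => ⟪xbar n, p - q⟫) atTop (𝓝 L) := by
    intro p hp q hq
    obtain ⟨L, hL⟩ := key p hp q hq
    refine ⟨L, ?_⟩
    have ha : Tendsto (fun i => ⟪x (i + 1), p - q⟫) atTop (𝓝 L) :=
      hL.comp (tendsto_add_atTop_nat 1)
    have := weighted_cesaro (w := fun i => lam (i + 1)) (a := fun i => ⟪x (i + 1), p - q⟫)
      (fun i => (hlam i).le) hσ ha
    refine this.congr fun n => ?_
    rw [hxbar n, real_inner_smul_left, sum_inner]
    congr 1
    exact Finset.sum_congr rfl fun i _ => by rw [real_inner_smul_left]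
  -- cluster points in F are unique, for any sequence whose inner products converge
  have uniq : ∀ (z : ℕ → H),
      (∀ p ∈ F, ∀ q ∈ F, ∃ L : ℝ, Tendsto (fun n => ⟪z n, p - q⟫) atTop (𝓝 L)) →
      {p : H | WeakClusterPt z p ∧ p ∈ F}.Subsingleton := by
    intro z hz p hp q hq
    obtain ⟨L, hL⟩ := hz p hp.2 q hq.2
    obtain ⟨φp, hφp, hyp⟩ := hp.1
    obtain ⟨φq, hφq, hyq⟩ := hq.1
    have e1 : ⟪p, p - q⟫ = L :=
      tendsto_nhds_unique (hyp (p - q)) (hL.comp hφp.tendsto_atTop)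
    have e2 : ⟪q, p - q⟫ = L :=
      tendsto_nhds_unique (hyq (p - q)) (hL.comp hφq.tendsto_atTop)
    have e3 : ⟪p - q, p - q⟫ = (0 : ℝ) := by
      rw [inner_sub_left]; rw [e1, e2]; ring
    have e4 : p - q = 0 := by
      rwa [inner_self_eq_zero] at e3
    exact sub_eq_zero.1 e4
  have sub1 := uniq x key
  have sub2 := uniq xbar keybar
  refine ⟨sub1, sub2, ?_, ?_⟩
  · rintro ⟨M, hM⟩ hF
    exact weakConv_of_bounded_unique hM fun p q hp hq =>
      sub1 ⟨hp, hF p hp⟩ ⟨hq, hF q hq⟩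
  · rintro ⟨M, hM⟩ hF
    exact weakConv_of_bounded_unique hM fun p q hp hq =>
      sub2 ⟨hp, hF p hp⟩ ⟨hq, hF q hq⟩
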